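/- arXiv:math-ph/0010005 — 3 statements merged into one kernel-verified Lean document; each statement's English description precedes it below -/
import Mathlib

section
/- For every m ≥ 1 and x⊥ ∈ ℝ², the two-dimensional Laplacian of |φ_m|² satisfies (2B)^{-1} Δ |φ_m(x⊥)|² = m |φ_{m-1}(x⊥)|² + (m+1) |φ_{m+1}(x⊥)|² − (2m+1) |φ_m(x⊥)|². -/
set_option maxHeartbeats 1000000


open MeasureTheory Real


/-- `|φ_m(x⊥)|² = (B/(2π)) (B|x⊥|²/2)^m / m! · e^{-B|x⊥|²/2}`. -/
noncomputable def phiSq (B : ℝ) (m : ℕ) (x : EuclideanSpace ℝ (Fin 2)) : ℝ :=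
  (B / (2 * π)) * (B * ‖x‖ ^ 2 / 2) ^ m / (Nat.factorial m) * Real.exp (-B * ‖x‖ ^ 2 / 2)

/-- The two-dimensional Laplacian: the sum of the second derivatives along the
two coordinate directions. -/
noncomputable def laplacian2 (f : EuclideanSpace ℝ (Fin 2) → ℝ)
    (x : EuclideanSpace ℝ (Fin 2)) : ℝ :=
  ∑ i : Fin 2, iteratedDeriv 2 (fun t : ℝ => f (x + t • EuclideanSpace.single i (1 : ℝ))) 0

noncomputable def Pf (c : ℝ) (k : ℕ) (s : ℝ) : ℝ := (c*s)^k * Real.exp (-(c*s))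
noncomputable def Pd (c : ℝ) (k : ℕ) (s : ℝ) : ℝ := ((k:ℝ)*c) * Pf c (k-1) s - c * Pf c k s

lemma hasDerivAt_Pf (c : ℝ) (k : ℕ) (s : ℝ) : HasDerivAt (Pf c k) (Pd c k s) s := by
  have h1 : HasDerivAt (fun s : ℝ => (c*s)^k) ((k:ℝ)*(c*s)^(k-1)*c) s := by
    exact (((hasDerivAt_id s).const_mul c).pow k).congr_deriv (by simp)
  have h2 : HasDerivAt (fun s : ℝ => Real.exp (-(c*s))) (Real.exp (-(c*s)) * (-c)) s := by
    have h3 : HasDerivAt (fun s : ℝ => -(c*s)) (-c) s := by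
      exact (((hasDerivAt_id s).const_mul c).neg).congr_deriv (by simp)
    simpa using h3.exp
  have := h1.mul h2
  refine this.congr_deriv ?_
  unfold Pd Pf; ring

noncomputable def G (B : ℝ) (m : ℕ) (s : ℝ) : ℝ :=
  (B/(2*π))/(m.factorial : ℝ) * Pf (B/2) m s
noncomputable def Gd1 (B : ℝ) (m : ℕ) (s : ℝ) : ℝ :=
  (B/(2*π))/(m.factorial : ℝ) * Pd (B/2) m s
noncomputable def Gd2 (B : ℝ) (m : ℕ) (s : ℝ) : ℝ :=
  (B/(2*π))/(m.factorial : ℝ) * (((m:ℝ)*(B/2)) * Pd (B/2) (m-1) s - (B/2) * Pd (B/2) m s)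

lemma hasDerivAt_G (B : ℝ) (m : ℕ) (s : ℝ) : HasDerivAt (G B m) (Gd1 B m s) s :=
  (hasDerivAt_Pf (B/2) m s).const_mul _

lemma hasDerivAt_Gd1 (B : ℝ) (m : ℕ) (s : ℝ) : HasDerivAt (Gd1 B m) (Gd2 B m s) s := by
  have h := ((((hasDerivAt_Pf (B/2) (m-1) s).const_mul ((m:ℝ)*(B/2))).sub
      ((hasDerivAt_Pf (B/2) m s).const_mul (B/2))).const_mul ((B/(2*π))/(m.factorial : ℝ)))
  exact h

lemma second_deriv_dir (B : ℝ) (m : ℕ) (s0 a : ℝ) :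
    iteratedDeriv 2 (fun t : ℝ => G B m (s0 + 2*a*t + t^2)) 0
      = Gd2 B m s0 * (2*a)^2 + Gd1 B m s0 * 2 := by
  have hq : ∀ t : ℝ, HasDerivAt (fun t : ℝ => s0 + 2*a*t + t^2) (2*a + 2*t) t := by
    intro t
    have : HasDerivAt (fun t : ℝ => 2*a*t + t^2) (2*a + 2*t) t := by
      exact (((hasDerivAt_id t).const_mul (2*a)).add (hasDerivAt_pow 2 t)).congr_deriv (by simp)
    simpa [← add_assoc] using this.const_add s0
  have hf : ∀ t : ℝ, HasDerivAt (fun t : ℝ => G B m (s0 + 2*a*t + t^2))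
      (Gd1 B m (s0 + 2*a*t + t^2) * (2*a + 2*t)) t := by
    intro t
    exact HasDerivAt.comp (h₂ := G B m) (h := fun t : ℝ => s0 + 2*a*t + t^2) t (hasDerivAt_G B m (s0 + 2*a*t + t^2)) (hq t)
  have hd : deriv (fun t : ℝ => G B m (s0 + 2*a*t + t^2))
      = fun t : ℝ => Gd1 B m (s0 + 2*a*t + t^2) * (2*a + 2*t) :=
    funext fun t => (hf t).deriv
  have hlin : HasDerivAt (fun t : ℝ => 2*a + 2*t) 2 0 := by
    simpa using ((hasDerivAt_id (0:ℝ)).const_mul 2).const_add (2*a)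
  have hg1 : HasDerivAt (fun t : ℝ => Gd1 B m (s0 + 2*a*t + t^2))
      (Gd2 B m (s0 + 2*a*0 + 0^2) * (2*a + 2*0)) 0 := by
    exact HasDerivAt.comp (h₂ := Gd1 B m) (h := fun t : ℝ => s0 + 2*a*t + t^2) 0 (hasDerivAt_Gd1 B m (s0 + 2*a*0 + 0^2)) (hq 0)
  have hf2 := hg1.mul hlin
  rw [show (2:ℕ) = 1 + 1 from rfl, iteratedDeriv_succ, iteratedDeriv_one, hd, HasDerivAt.deriv (f := fun t => Gd1 B m (s0 + 2*a*t + t^2) * (2*a + 2*t)) hf2]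
  norm_num; ring

lemma phiSq_eq_G (B : ℝ) (m : ℕ) (y : EuclideanSpace ℝ (Fin 2)) :
    phiSq B m y = G B m (‖y‖^2) := by
  unfold phiSq G Pf
  rw [show B * ‖y‖ ^ 2 / 2 = (B/2) * ‖y‖^2 by ring,
    show -B * ‖y‖ ^ 2 / 2 = -((B/2) * ‖y‖^2) by ring]
  ring

/-- for `m ≥ 1`,
`(2B)⁻¹ Δ|φ_m|² = m|φ_{m-1}|² + (m+1)|φ_{m+1}|² − (2m+1)|φ_m|²`. -/
theorem laplacian_phiSq (B : ℝ) (hB : 0 < B) (m : ℕ) (hm : 1 ≤ m)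
    (x : EuclideanSpace ℝ (Fin 2)) :
    (2 * B)⁻¹ * laplacian2 (phiSq B m) x =
      (m : ℝ) * phiSq B (m - 1) x + ((m : ℝ) + 1) * phiSq B (m + 1) x -
        (2 * (m : ℝ) + 1) * phiSq B m x := by
  obtain ⟨k, rfl⟩ : ∃ k, m = k + 1 := ⟨m - 1, (Nat.succ_pred_eq_of_pos hm).symm⟩
  have hnorm : ∀ i : Fin 2, ∀ t : ℝ,
      ‖x + t • EuclideanSpace.single i (1:ℝ)‖^2 = ‖x‖^2 + 2*(x i)*t + t^2 := by
    intro i t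
    rw [norm_add_sq_real]
    simp [inner_smul_right, EuclideanSpace.inner_single_right, norm_smul,
      EuclideanSpace.norm_single]
    ring
  have hfun : ∀ i : Fin 2,
      (fun t : ℝ => phiSq B (k+1) (x + t • EuclideanSpace.single i (1:ℝ)))
        = fun t : ℝ => G B (k+1) (‖x‖^2 + 2*(x i)*t + t^2) := by
    intro i; funext t; rw [phiSq_eq_G, hnorm]
  have hx : (x 0)^2 + (x 1)^2 = ‖x‖^2 := by
    rw [EuclideanSpace.norm_eq, Real.sq_sqrt (by positivity)]
    simp [Real.norm_eq_abs, sq_abs]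
  rw [laplacian2, Fin.sum_univ_two, hfun 0, hfun 1, second_deriv_dir, second_deriv_dir]
  rw [show Gd2 B (k+1) (‖x‖^2) * (2*(x 0))^2 + Gd1 B (k+1) (‖x‖^2) * 2 +
      (Gd2 B (k+1) (‖x‖^2) * (2*(x 1))^2 + Gd1 B (k+1) (‖x‖^2) * 2)
      = 4*‖x‖^2*Gd2 B (k+1) (‖x‖^2) + 4*Gd1 B (k+1) (‖x‖^2) by rw [← hx]; ring]
  simp only [Nat.add_sub_cancel]
  unfold Gd2 Gd1 Pd Pf phiSq
  rw [show -B * ‖x‖ ^ 2 / 2 = -((B/2) * ‖x‖^2) by ring,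
    show B * ‖x‖ ^ 2 / 2 = (B/2) * ‖x‖^2 by ring]
  simp only [Nat.add_sub_cancel]
  cases k with
  | zero =>
    norm_num [Nat.factorial]
    field_simp
    ring
  | succ j =>
    simp only [Nat.add_sub_cancel, Nat.factorial_succ]
    push_cast
    field_simp [hB.ne', Real.pi_ne_zero, Nat.cast_ne_zero.mpr (Nat.factorial_ne_zero j)]
    ring
end

section
/- For every m ≥ 0, ∫_{ℝ²} |φ_m(x⊥)|² |x⊥|^{-1} dx⊥ ≤ sqrt(π/2) · B^{1/2} / (m+1)^{1/2}. -/
open MeasureTheory Real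

/-- `Γ(m+1/2) √(m+1) ≤ √π · m!`, by induction on `m`. -/
lemma gamma_half_bound (m : ℕ) :
    Real.Gamma ((m : ℝ) + 1/2) * Real.sqrt ((m : ℝ) + 1) ≤ Real.sqrt π * m.factorial := by
  induction m with
  | zero =>
    have h0 : ((0:ℕ) : ℝ) + 1/2 = 1/2 := by norm_num
    rw [h0, Real.Gamma_one_half_eq]
    simp
  | succ n ih =>
    have hG : 0 < Real.Gamma ((n : ℝ) + 1/2) := Real.Gamma_pos_of_pos (by positivity)
    have h2 : ((n : ℝ) + 1/2) * Real.sqrt ((n : ℝ) + 1 + 1)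
        ≤ ((n : ℝ) + 1) * Real.sqrt ((n : ℝ) + 1) := by
      rw [show ((n:ℝ)+1/2) * Real.sqrt ((n:ℝ)+1+1) = Real.sqrt (((n:ℝ)+1/2)^2 * ((n:ℝ)+1+1)) by
            rw [Real.sqrt_mul (by positivity), Real.sqrt_sq (by positivity)],
          show ((n:ℝ)+1) * Real.sqrt ((n:ℝ)+1) = Real.sqrt (((n:ℝ)+1)^2 * ((n:ℝ)+1)) by
            rw [Real.sqrt_mul (by positivity), Real.sqrt_sq (by positivity)]]
      apply Real.sqrt_le_sqrt
      nlinarith [Nat.cast_nonneg (α := ℝ) n]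
    push_cast
    rw [show (n : ℝ) + 1 + 1/2 = ((n : ℝ) + 1/2) + 1 by ring,
      Real.Gamma_add_one (by positivity)]
    calc ((n : ℝ) + 1/2) * Real.Gamma ((n : ℝ) + 1/2) * Real.sqrt ((n : ℝ) + 1 + 1)
        = Real.Gamma ((n : ℝ) + 1/2) * (((n : ℝ) + 1/2) * Real.sqrt ((n : ℝ) + 1 + 1)) := by ring
      _ ≤ Real.Gamma ((n : ℝ) + 1/2) * (((n : ℝ) + 1) * Real.sqrt ((n : ℝ) + 1)) :=
          mul_le_mul_of_nonneg_left h2 hG.le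
      _ = ((n : ℝ) + 1) * (Real.Gamma ((n : ℝ) + 1/2) * Real.sqrt ((n : ℝ) + 1)) := by ring
      _ ≤ ((n : ℝ) + 1) * (Real.sqrt π * n.factorial) :=
          mul_le_mul_of_nonneg_left ih (by positivity)
      _ = Real.sqrt π * (((n : ℝ) + 1) * n.factorial) := by ring
      _ = Real.sqrt π * ((n+1).factorial : ℝ) := by
          rw [Nat.factorial_succ]; push_cast; ring

/-- Exact evaluation of the integral in polar coordinates:
`∫ |φ_m|² |x⊥|⁻¹ = √(B/2) · Γ(m+1/2) / m!`. -/
lemma integral_phiSq_inv_norm_eq (B : ℝ) (hB : 0 < B) (m : ℕ) :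
    ∫ x : EuclideanSpace ℝ (Fin 2), phiSq B m x * ‖x‖⁻¹ =
      Real.sqrt (B / 2) * Real.Gamma ((m : ℝ) + 1/2) / m.factorial := by
  have hπ : 0 < π := Real.pi_pos
  have hball : (volume (Metric.ball (0 : EuclideanSpace ℝ (Fin 2)) 1)).toReal = π := by
    rw [EuclideanSpace.volume_ball]
    simp only [Fintype.card_fin]
    rw [show ((2:ℕ):ℝ)/2 + 1 = 2 by norm_num, Real.Gamma_two,
      Real.sq_sqrt hπ.le]
    simp [ENNReal.toReal_ofReal hπ.le]
  have key := MeasureTheory.integral_fun_norm_addHaar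
    (volume : Measure (EuclideanSpace ℝ (Fin 2)))
    (fun r : ℝ => (B / (2 * π)) * (B * r ^ 2 / 2) ^ m / (Nat.factorial m) *
      Real.exp (-B * r ^ 2 / 2) * r⁻¹)
  simp only [finrank_euclideanSpace_fin, smul_eq_mul, nsmul_eq_mul, Measure.real, hball] at key
  unfold phiSq
  rw [key]
  have h1 : ∀ r ∈ Set.Ioi (0:ℝ), r ^ (2-1) *
      ((B / (2 * π)) * (B * r ^ 2 / 2) ^ m / (Nat.factorial m) *
        Real.exp (-B * r ^ 2 / 2) * r⁻¹)
      = (B/(2*π)) * (B/2)^m / m.factorial *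
        (r ^ (((2*m : ℕ)) : ℝ) * Real.exp (-(B/2) * r ^ ((2:ℕ) : ℝ))) := by
    intro r hr
    have hr0 : r ≠ 0 := ne_of_gt hr
    rw [Real.rpow_natCast, Real.rpow_natCast,
      show -B * r^2/2 = -(B/2)*r^2 by ring, pow_mul]
    field_simp
    ring
  rw [MeasureTheory.setIntegral_congr_fun measurableSet_Ioi h1,
    MeasureTheory.integral_const_mul,
    integral_rpow_mul_exp_neg_mul_rpow (by norm_num)
      (lt_of_lt_of_le neg_one_lt_zero (Nat.cast_nonneg _)) (by positivity : (0:ℝ) < B/2)]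
  have hG : Real.Gamma ((((2*m : ℕ):ℝ) + 1) / ((2:ℕ):ℝ)) = Real.Gamma ((m:ℝ) + 1/2) := by
    congr 1; push_cast; ring
  have hexp : (B/2:ℝ)^m * (B/2) ^ (-(((2*m : ℕ):ℝ) + 1) / ((2:ℕ):ℝ)) = (B/2) ^ (-(1:ℝ)/2) := by
    rw [← Real.rpow_natCast (B/2) m, ← Real.rpow_add (by positivity)]
    congr 1; push_cast; ring
  have hXY : (B/2:ℝ) * ((B/2)^m * (B/2) ^ (-(((2*m : ℕ):ℝ) + 1) / ((2:ℕ):ℝ)))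
      = Real.sqrt (B/2) := by
    rw [hexp, Real.sqrt_eq_rpow]
    nth_rewrite 1 [← Real.rpow_one (B/2)]
    rw [← Real.rpow_add (by positivity)]
    norm_num
  rw [hG]
  set Y := (B/2:ℝ) ^ (-(((2*m : ℕ):ℝ) + 1) / ((2:ℕ):ℝ)) with hY
  rw [← hXY]
  have hfact : (m.factorial : ℝ) ≠ 0 := by positivity
  field_simp

/-- `∫ |φ_m|² |x⊥|⁻¹ dx⊥ ≤ √(π/2) · B^{1/2} / (m+1)^{1/2}`. -/
theorem integral_phiSq_inv_norm (B : ℝ) (hB : 0 < B) (m : ℕ) :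
    ∫ x : EuclideanSpace ℝ (Fin 2), phiSq B m x * ‖x‖⁻¹ ≤
      Real.sqrt (π / 2) * Real.sqrt B / Real.sqrt ((m : ℝ) + 1) := by
  rw [integral_phiSq_inv_norm_eq B hB m]
  have hfact : (0:ℝ) < m.factorial := by positivity
  have hG : 0 < Real.Gamma ((m:ℝ) + 1/2) := Real.Gamma_pos_of_pos (by positivity)
  have hm1 : (0:ℝ) < Real.sqrt ((m:ℝ) + 1) := Real.sqrt_pos.mpr (by positivity)
  have hkey : Real.Gamma ((m:ℝ) + 1/2) / m.factorial
      ≤ Real.sqrt π / Real.sqrt ((m:ℝ) + 1) := by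
    rw [div_le_div_iff₀ hfact hm1]
    calc Real.Gamma ((m:ℝ) + 1/2) * Real.sqrt ((m:ℝ) + 1) ≤ Real.sqrt π * m.factorial :=
          gamma_half_bound m
      _ = Real.sqrt π * m.factorial := rfl
  calc Real.sqrt (B/2) * Real.Gamma ((m:ℝ) + 1/2) / m.factorial
      = Real.sqrt (B/2) * (Real.Gamma ((m:ℝ) + 1/2) / m.factorial) := by ring
    _ ≤ Real.sqrt (B/2) * (Real.sqrt π / Real.sqrt ((m:ℝ) + 1)) :=
        mul_le_mul_of_nonneg_left hkey (Real.sqrt_nonneg _)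
    _ = Real.sqrt (π / 2) * Real.sqrt B / Real.sqrt ((m : ℝ) + 1) := by
        rw [Real.sqrt_div hB.le, Real.sqrt_div Real.pi_pos.le]
        ring
end

section
/- Let h = −d²/dz² − Φ(z) be a one-dimensional Schrödinger operator on L²(ℝ) with Φ even (reflection symmetric), Φ(z) ≤ Z/|z| for all z ≠ 0, and suppose h has at least two eigenvalues below the essential spectrum. Then the second lowest eigenvalue μ² of h satisfies μ² ≥ −Z²/4. -/
open MeasureTheory Filter Set intervalIntegral


lemma aux_not_integrable {u : ℝ → ℝ} (hL : Integrable (fun z => u z ^ 2)) {c X : ℝ}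
    (hc : 0 < c) (h : ∀ z ≥ X, c ≤ u z ^ 2) : False := by
  have h1 : IntegrableOn (fun z => u z ^ 2) (Set.Ici X) volume := hL.integrableOn
  have h2 : IntegrableOn (fun _ : ℝ => c) (Set.Ici X) volume := by
    refine Integrable.mono h1 aestronglyMeasurable_const ?_
    filter_upwards [ae_restrict_mem measurableSet_Ici] with z hz
    rw [Real.norm_eq_abs, Real.norm_eq_abs, abs_of_pos hc]
    exact (h z hz).trans (le_abs_self _)
  rw [integrableOn_const_iff] at h2
  rcases h2 with h2 | h2
  · exact hc.ne' (by simpa using h2)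
  · simp [Real.volume_Ici] at h2

lemma aux_exists_small {u : ℝ → ℝ} (hL : Integrable (fun z => u z ^ 2)) (X : ℝ) {ε : ℝ}
    (hε : 0 < ε) : ∃ z ≥ X, u z ^ 2 < ε := by
  by_contra h
  push_neg at h
  exact aux_not_integrable hL hε h

lemma aux_tendsto_zero_of_antitone {f : ℝ → ℝ} {R : ℝ} (hanti : AntitoneOn f (Set.Ici R))
    (hge : ∀ z ≥ R, 0 ≤ f z) (hex : ∀ ε > (0:ℝ), ∃ z ≥ R, f z < ε) :
    Tendsto f atTop (nhds 0) := by
  rw [Metric.tendsto_atTop]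
  intro ε hε
  obtain ⟨z₁, hz₁, hfz₁⟩ := hex ε hε
  refine ⟨z₁, fun z hz => ?_⟩
  have h1 : f z ≤ f z₁ := hanti hz₁ (hz₁.trans hz) hz
  have h2 : 0 ≤ f z := hge z (hz₁.trans hz)
  rw [Real.dist_eq, sub_zero, abs_of_nonneg h2]; linarith

lemma aux_tendsto_zero_of_monotone {f : ℝ → ℝ} {R : ℝ} (hmono : MonotoneOn f (Set.Ici R))
    (hle : ∀ z ≥ R, f z ≤ 0) (hex : ∀ ε > (0:ℝ), ∃ z ≥ R, -ε < f z) :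
    Tendsto f atTop (nhds 0) := by
  rw [Metric.tendsto_atTop]
  intro ε hε
  obtain ⟨z₁, hz₁, hfz₁⟩ := hex ε hε
  refine ⟨z₁, fun z hz => ?_⟩
  have h1 : f z₁ ≤ f z := hmono hz₁ (hz₁.trans hz) hz
  have h2 : f z ≤ 0 := hle z (hz₁.trans hz)
  rw [Real.dist_eq, sub_zero, abs_of_nonpos h2]; linarith


lemma aux_no_escape {u : ℝ → ℝ} (hd1 : Differentiable ℝ u) (hd2 : Differentiable ℝ (deriv u))
    (hL : Integrable (fun z => u z ^ 2)) {R z₀ : ℝ} (hz₀ : R ≤ z₀)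
    (hq : ∀ z, R ≤ z → 0 < u z → 0 < deriv (deriv u) z)
    (h0 : 0 < u z₀) (h1 : 0 < deriv u z₀) : False := by
  have key : ∀ z, z₀ ≤ z → 0 < u z := by
    by_contra h
    push_neg at h
    obtain ⟨w, hw, hw0⟩ := h
    set A := {z | z₀ ≤ z ∧ u z ≤ 0} with hA
    have hA_ne : A.Nonempty := ⟨w, hw, hw0⟩
    have hA_closed : IsClosed A := by
      have : A = Set.Ici z₀ ∩ u ⁻¹' (Set.Iic 0) := by ext z; simp [hA, Set.mem_Ici]
      rw [this]
      exact isClosed_Ici.inter (isClosed_Iic.preimage hd1.continuous)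
    have hA_bdd : BddBelow A := ⟨z₀, fun z hz => hz.1⟩
    set p := sInf A with hp
    have hpA : p ∈ A := hA_closed.csInf_mem hA_ne hA_bdd
    have hp0 : z₀ < p := by
      rcases lt_or_eq_of_le hpA.1 with h' | h'
      · exact h'
      · exfalso; rw [← h'] at hpA; linarith [hpA.2]
    have hpos : ∀ z, z₀ ≤ z → z < p → 0 < u z := by
      intro z hz hzp
      by_contra hn
      push_neg at hn
      exact absurd (csInf_le hA_bdd ⟨hz, hn⟩) (not_le.mpr hzp)
    have hmono : MonotoneOn (deriv u) (Set.Icc z₀ p) := by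
      refine monotoneOn_of_deriv_nonneg (convex_Icc _ _) hd2.continuous.continuousOn
        (hd2.differentiableOn) ?_
      intro z hz
      rw [interior_Icc] at hz
      exact (hq z (hz₀.trans hz.1.le) (hpos z hz.1.le hz.2)).le
    have hderiv_pos : ∀ z ∈ interior (Set.Icc z₀ p), 0 < deriv u z := by
      intro z hz
      rw [interior_Icc] at hz
      have := hmono ⟨le_refl z₀, hp0.le⟩ ⟨hz.1.le, hz.2.le⟩ hz.1.le
      linarith
    have hsm : StrictMonoOn u (Set.Icc z₀ p) :=
      strictMonoOn_of_deriv_pos (convex_Icc _ _) hd1.continuous.continuousOn hderiv_pos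
    have := hsm ⟨le_refl z₀, hp0.le⟩ ⟨hp0.le, le_refl p⟩ hp0
    linarith [hpA.2]
  have hmono2 : MonotoneOn (deriv u) (Set.Ici z₀) := by
    refine monotoneOn_of_deriv_nonneg (convex_Ici _) hd2.continuous.continuousOn
      hd2.differentiableOn ?_
    intro z hz
    rw [interior_Ici] at hz
    exact (hq z (hz₀.trans hz.le) (key z hz.le)).le
  have hu_mono : MonotoneOn u (Set.Ici z₀) := by
    refine monotoneOn_of_deriv_nonneg (convex_Ici _) hd1.continuous.continuousOn
      hd1.differentiableOn ?_
    intro z hz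
    rw [interior_Ici] at hz
    have := hmono2 (Set.self_mem_Ici) (Set.mem_Ici.mpr hz.le) hz.le
    linarith
  refine aux_not_integrable hL (X := z₀) (pow_pos h0 2) (fun z hz => ?_)
  have h2 : u z₀ ≤ u z := hu_mono Set.self_mem_Ici hz hz
  have := pow_le_pow_left₀ h0.le h2 2
  linarith



-- basic smoothness unpack
lemma aux_smooth {u : ℝ → ℝ} (hsm : ContDiff ℝ 2 u) :
    Differentiable ℝ u ∧ Differentiable ℝ (deriv u) := by
  have h2 : ContDiff ℝ ((1:ℕ) + 1) u := by exact_mod_cast hsm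
  rw [contDiff_succ_iff_deriv] at h2
  exact ⟨h2.1, h2.2.2.differentiable (by simp)⟩

-- the potential coefficient bound
lemma aux_coeff {Z μ : ℝ} {Φ : ℝ → ℝ} (hZ : 0 < Z) (hμ : μ < -Z^2/4)
    (hb : ∀ z, 0 < z → Φ z ≤ Z / z) : ∀ z, 8/Z ≤ z → Z^2/8 ≤ -(Φ z + μ) := by
  intro z hz
  have hR : 0 < 8/Z := by positivity
  have hz0 : 0 < z := lt_of_lt_of_le hR hz
  have h1 : Φ z ≤ Z / z := hb z hz0
  have h2 : Z / z ≤ Z / (8/Z) := by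
    apply div_le_div_of_nonneg_left hZ.le hR hz
  rw [div_div_eq_mul_div, mul_comm] at h2
  nlinarith [h2, h1]

lemma aux_decay {Z μ : ℝ} {Φ u : ℝ → ℝ} (hZ : 0 < Z) (hμ : μ < -Z^2/4)
    (hb : ∀ z, 0 < z → Φ z ≤ Z / z) (hsm : ContDiff ℝ 2 u)
    (hL : Integrable (fun z => u z ^ 2))
    (heq : ∀ z, deriv (deriv u) z = -(Φ z + μ) * u z) :
    Tendsto (fun z => u z ^ 2) atTop (nhds 0) ∧
      Tendsto (fun z => u z * deriv u z) atTop (nhds 0) := by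
  obtain ⟨hd1, hd2⟩ := aux_smooth hsm
  set R := 8/Z with hR
  have hcoeff := aux_coeff hZ hμ hb
  have hδ : (0:ℝ) < Z^2/8 := by positivity
  -- no escape, both signs
  have hq : ∀ z, R ≤ z → 0 < u z → 0 < deriv (deriv u) z := by
    intro z hz hu
    rw [heq z]
    exact mul_pos (lt_of_lt_of_le hδ (hcoeff z hz)) hu
  have hL' : Integrable (fun z => (-u z) ^ 2) := by simpa using hL
  have hd1' : Differentiable ℝ (fun z => -u z) := hd1.neg
  have hderiv_neg : deriv (fun z => -u z) = fun z => -deriv u z := by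
    funext z; exact deriv.neg
  have hd2' : Differentiable ℝ (deriv (fun z => -u z)) := by
    rw [hderiv_neg]; exact hd2.neg
  have hq' : ∀ z, R ≤ z → 0 < -u z → 0 < deriv (deriv (fun w => -u w)) z := by
    intro z hz hu
    rw [hderiv_neg]
    have : deriv (fun z => -deriv u z) z = -deriv (deriv u) z := deriv.neg
    rw [this, heq z]
    have h1 : Z^2/8 ≤ -(Φ z + μ) := hcoeff z hz
    nlinarith
  have hprod : ∀ z, R ≤ z → u z * deriv u z ≤ 0 := by
    intro z hz
    rcases lt_trichotomy (u z) 0 with h | h | h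
    · by_contra hc
      push_neg at hc
      have hderiv : deriv u z < 0 := by
        rcases lt_trichotomy (deriv u z) 0 with h' | h' | h'
        · exact h'
        · exfalso; rw [h'] at hc; simp at hc
        · exfalso; nlinarith
      refine aux_no_escape hd1' hd2' hL' hz hq' (by linarith) ?_
      rw [hderiv_neg]; exact neg_pos.mpr hderiv
    · rw [h]; simp
    · by_contra hc
      push_neg at hc
      have hderiv : 0 < deriv u z := by nlinarith
      exact aux_no_escape hd1 hd2 hL hz hq h hderiv
  -- f = u² antitone on [R,∞), tendsto 0
  have hfd : ∀ z : ℝ, HasDerivAt (fun w => u w ^ 2) (2 * u z * deriv u z) z := by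
    intro z
    have := (hd1.differentiableAt (x := z)).hasDerivAt.fun_pow 2
    simpa [mul_comm, mul_assoc, mul_left_comm] using this
  have hfderiv : deriv (fun w => u w ^ 2) = fun z => 2 * u z * deriv u z :=
    funext fun z => (hfd z).deriv
  have hanti : AntitoneOn (fun w => u w ^ 2) (Set.Ici R) := by
    refine antitoneOn_of_deriv_nonpos (convex_Ici _) (hd1.continuous.pow 2).continuousOn ?_ ?_
    · intro z hz; exact (hfd z).differentiableAt.differentiableWithinAt
    · intro z hz
      rw [interior_Ici] at hz
      rw [hfderiv]
      show 2 * u z * deriv u z ≤ 0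
      have := hprod z hz.le
      nlinarith
  have hf0 : Tendsto (fun z => u z ^ 2) atTop (nhds 0) := by
    refine aux_tendsto_zero_of_antitone hanti (fun z _ => sq_nonneg _) ?_
    intro ε hε
    exact aux_exists_small hL R hε
  -- h = u u' monotone on [R,∞), tendsto 0
  have hhd : ∀ z : ℝ, HasDerivAt (fun w => u w * deriv u w)
      (deriv u z * deriv u z + u z * deriv (deriv u) z) z := by
    intro z
    exact (hd1.differentiableAt.hasDerivAt).mul (hd2.differentiableAt.hasDerivAt)
  have hhderiv : deriv (fun w => u w * deriv u w) =
      fun z => deriv u z * deriv u z + u z * deriv (deriv u) z :=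
    funext fun z => (hhd z).deriv
  have hmono : MonotoneOn (fun w => u w * deriv u w) (Set.Ici R) := by
    refine monotoneOn_of_deriv_nonneg (convex_Ici _) ?_ ?_ ?_
    · exact (hd1.continuous.mul hd2.continuous).continuousOn
    · intro z hz; exact (hhd z).differentiableAt.differentiableWithinAt
    · intro z hz
      rw [interior_Ici] at hz
      rw [hhderiv]
      show 0 ≤ deriv u z * deriv u z + u z * deriv (deriv u) z
      rw [heq z]
      have h1 : Z^2/8 ≤ -(Φ z + μ) := hcoeff z hz.le
      nlinarith [sq_nonneg (deriv u z), sq_nonneg (u z), mul_nonneg (le_trans hδ.le h1) (sq_nonneg (u z))]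
  have hh0 : Tendsto (fun z => u z * deriv u z) atTop (nhds 0) := by
    refine aux_tendsto_zero_of_monotone hmono (fun z hz => hprod z hz) ?_
    intro ε hε
    by_contra hcon
    push_neg at hcon
    -- then u u' ≤ -ε on [R,∞), so u² decreases linearly, contradiction with u² ≥ 0
    have hφanti : AntitoneOn (fun w => u w ^ 2 + 2*ε*w) (Set.Ici R) := by
      refine antitoneOn_of_deriv_nonpos (convex_Ici _)
        ((hd1.continuous.pow 2).add (continuous_const.mul continuous_id)).continuousOn ?_ ?_
      · intro z hz
        exact ((hfd z).add ((hasDerivAt_id z).const_mul (2*ε))).differentiableAt.differentiableWithinAt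
      · intro z hz
        rw [interior_Ici] at hz
        have hd : HasDerivAt (fun w => u w ^ 2 + 2*ε*w) (2 * u z * deriv u z + 2*ε*1) z :=
          (hfd z).add ((hasDerivAt_id z).const_mul (2*ε))
        rw [hd.deriv]
        have := hcon z hz.le
        nlinarith
    set z₁ := max R (R + (u R ^ 2) / (2*ε) + 1) with hz₁
    have hz₁R : R ≤ z₁ := le_max_left _ _
    have hkey := hφanti Set.self_mem_Ici (Set.mem_Ici.mpr hz₁R) hz₁R
    simp only at hkey
    have hz₁big : R + (u R ^ 2) / (2*ε) + 1 ≤ z₁ := le_max_right _ _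
    have hsq : 0 ≤ u z₁ ^ 2 := sq_nonneg _
    have hεpos : 0 < 2*ε := by linarith
    have : u R ^ 2 + 2*ε*R < 2*ε*z₁ := by
      have h2 : 2*ε*(R + (u R ^ 2) / (2*ε) + 1) ≤ 2*ε*z₁ := by nlinarith
      have h3 : 2*ε*(R + (u R ^ 2) / (2*ε) + 1) = 2*ε*R + u R ^ 2 + 2*ε := by
        field_simp
      nlinarith
    linarith [hkey, hsq]
  exact ⟨hf0, hh0⟩



lemma aux_decay_pos {Z μ : ℝ} {Φ u : ℝ → ℝ} (hZ : 0 < Z) (hμ : μ < -Z^2/4)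
    (hb : ∀ z, 0 < z → Φ z ≤ Z / z) (hsm : ContDiff ℝ 2 u)
    (hL : Integrable (fun z => u z ^ 2))
    (heq : ∀ z, deriv (deriv u) z = -(Φ z + μ) * u z)
    (hpos : ∀ z, 0 ≤ u z) :
    Tendsto u atTop (nhds 0) ∧ Tendsto (deriv u) atTop (nhds 0) := by
  obtain ⟨hd1, hd2⟩ := aux_smooth hsm
  set R := 8/Z with hR
  have hcoeff := aux_coeff hZ hμ hb
  have hδ : (0:ℝ) < Z^2/8 := by positivity
  have hq : ∀ z, R ≤ z → 0 < u z → 0 < deriv (deriv u) z := by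
    intro z hz hu
    rw [heq z]
    exact mul_pos (lt_of_lt_of_le hδ (hcoeff z hz)) hu
  -- deriv u ≤ 0 on [R,∞)
  have hd_nonpos : ∀ z, R ≤ z → deriv u z ≤ 0 := by
    intro z hz
    by_contra hc
    push_neg at hc
    rcases (hpos z).lt_or_eq with h | h
    · exact aux_no_escape hd1 hd2 hL hz hq h hc
    · have hmin : IsLocalMin u z := by
        refine Filter.Eventually.of_forall (fun y => ?_)
        rw [← h]; exact hpos y
      have := hmin.deriv_eq_zero
      rw [this] at hc
      exact lt_irrefl 0 hc
  have hanti : AntitoneOn u (Set.Ici R) := by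
    refine antitoneOn_of_deriv_nonpos (convex_Ici _) hd1.continuous.continuousOn
      hd1.differentiableOn ?_
    intro z hz
    rw [interior_Ici] at hz
    exact hd_nonpos z hz.le
  have hu0 : Tendsto u atTop (nhds 0) := by
    refine aux_tendsto_zero_of_antitone hanti (fun z _ => hpos z) ?_
    intro ε hε
    obtain ⟨z, hz, hsmall⟩ := aux_exists_small hL R (by positivity : (0:ℝ) < ε^2)
    refine ⟨z, hz, ?_⟩
    nlinarith [hpos z]
  have hmono : MonotoneOn (deriv u) (Set.Ici R) := by
    refine monotoneOn_of_deriv_nonneg (convex_Ici _) hd2.continuous.continuousOn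
      hd2.differentiableOn ?_
    intro z hz
    rw [interior_Ici] at hz
    rw [heq z]
    exact mul_nonneg (le_trans hδ.le (hcoeff z hz.le)) (hpos z)
  have hd0 : Tendsto (deriv u) atTop (nhds 0) := by
    refine aux_tendsto_zero_of_monotone hmono hd_nonpos ?_
    intro ε hε
    by_contra hcon
    push_neg at hcon
    have hφanti : AntitoneOn (fun w => u w + ε*w) (Set.Ici R) := by
      refine antitoneOn_of_deriv_nonpos (convex_Ici _)
        (hd1.continuous.add (continuous_const.mul continuous_id)).continuousOn ?_ ?_
      · intro z hz
        exact ((hd1.differentiableAt.hasDerivAt).add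
          ((hasDerivAt_id z).const_mul ε)).differentiableAt.differentiableWithinAt
      · intro z hz
        rw [interior_Ici] at hz
        have hd : HasDerivAt (fun w => u w + ε*w) (deriv u z + ε*1) z :=
          (hd1.differentiableAt.hasDerivAt).add ((hasDerivAt_id z).const_mul ε)
        rw [hd.deriv]
        have := hcon z hz.le
        linarith
    set z₁ := max R (R + u R / ε + 1) with hz₁
    have hz₁R : R ≤ z₁ := le_max_left _ _
    have hkey := hφanti Set.self_mem_Ici (Set.mem_Ici.mpr hz₁R) hz₁R
    simp only at hkey
    have hz₁big : R + u R / ε + 1 ≤ z₁ := le_max_right _ _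
    have h2 : ε*(R + u R / ε + 1) ≤ ε*z₁ := by nlinarith
    have h3 : ε*(R + u R / ε + 1) = ε*R + u R + ε := by field_simp
    have := hpos z₁
    nlinarith
  exact ⟨hu0, hd0⟩



lemma aux_cont2 {u : ℝ → ℝ} (hsm : ContDiff ℝ 2 u) : Continuous (deriv (deriv u)) := by
  have h2 : ContDiff ℝ ((1:ℕ) + 1) u := by exact_mod_cast hsm
  rw [contDiff_succ_iff_deriv] at h2
  exact h2.2.2.continuous_deriv (by exact_mod_cast le_rfl)

lemma aux_hardy {Z μ : ℝ} {Φ u : ℝ → ℝ} (hZ : 0 < Z) (hμ : μ < -Z^2/4)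
    (hb : ∀ z, 0 < z → Φ z ≤ Z / z) (hsm : ContDiff ℝ 2 u)
    (hL : Integrable (fun z => u z ^ 2))
    (heq : ∀ z, deriv (deriv u) z = -(Φ z + μ) * u z)
    {a z₁ : ℝ} (ha : 0 ≤ a) (hua : u a = 0) (hz₁ : a < z₁) (huz₁ : u z₁ ≠ 0) : False := by
  obtain ⟨hd1, hd2⟩ := aux_smooth hsm
  have hc2 : Continuous (deriv (deriv u)) := aux_cont2 hsm
  set ε := -Z^2/4 - μ with hεdef
  have hε : 0 < ε := by simp only [hεdef]; linarith
  clear_value ε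
  -- choose a window [p,q] around z₁ where u ≠ 0
  have hopen : IsOpen {y : ℝ | u y ≠ 0} := isOpen_compl_singleton.preimage hd1.continuous
  obtain ⟨r, hr, hball⟩ := Metric.isOpen_iff.mp hopen z₁ huz₁
  set η := min (r/2) ((z₁ - a)/2) with hηdef
  have hη : 0 < η := lt_min (by linarith) (by linarith)
  set p := z₁ - η with hpdef
  set q := z₁ + η with hqdef
  have hap : a < p := by
    have : η ≤ (z₁ - a)/2 := min_le_right _ _
    simp only [hpdef]; linarith
  have hpq : p < q := by simp only [hpdef, hqdef]; linarith
  have hne : ∀ x ∈ Set.Icc p q, u x ≠ 0 := by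
    intro x hx
    apply hball
    rw [Metric.mem_ball, Real.dist_eq]
    have h1 : η ≤ r/2 := min_le_left _ _
    have h2 : p ≤ x := hx.1
    have h3 : x ≤ q := hx.2
    rw [hpdef] at h2
    rw [hqdef] at h3
    rw [abs_sub_lt_iff]
    constructor <;> linarith
  set κ := ∫ x in p..q, u x ^ 2 with hκdef
  have hκ2 : 0 < κ := by
    refine intervalIntegral_pos_of_pos_on ((hd1.continuous.pow 2).intervalIntegrable p q) ?_ hpq
    intro x hx
    exact pow_two_pos_of_ne_zero (hne x (Set.mem_Icc.mpr ⟨hx.1.le, hx.2.le⟩))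
  -- the key finite-interval inequality
  have hκ : 0 < κ := hκ2
  clear_value κ
  set A := fun T => u T * deriv u T - ((T - a)⁻¹ - Z/2) * u T ^ 2 with hAdef
  set B := fun α => -(u α * deriv u α) + ((α - a)⁻¹ - Z/2) * u α ^ 2 with hBdef
  clear_value A B
  have key : ∀ α T, a < α → α ≤ p → q ≤ T → ε * κ ≤ A T + B α := by
    intro α T hαa hαp hqT
    have hαT : α ≤ T := le_trans hαp (le_trans hpq.le hqT)
    have huIcc : Set.uIcc α T = Set.Icc α T := Set.uIcc_of_le hαT
    have hxa : ∀ x ∈ Set.Icc α T, x - a ≠ 0 := fun x hx => by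
      have := hx.1; exact ne_of_gt (by linarith)
    set g := fun x : ℝ => (x - a)⁻¹ - Z/2 with hgdef
    set G := fun x : ℝ => -1 / (x - a) ^ 2 with hGdef
    have hgd : ∀ x ∈ Set.uIcc α T, HasDerivAt g (G x) x := by
      intro x hx
      rw [huIcc] at hx
      have h1 : HasDerivAt (fun y : ℝ => y - a) 1 x := (hasDerivAt_id x).sub_const a
      have h2 := h1.inv (hxa x hx)
      simpa [hGdef, hgdef] using h2.sub_const (Z/2)
    have hvd : ∀ x : ℝ, HasDerivAt (fun w => u w ^ 2) (2 * u x * deriv u x) x := by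
      intro x
      have := (hd1.differentiableAt (x := x)).hasDerivAt.fun_pow 2
      simpa [mul_comm, mul_assoc, mul_left_comm] using this
    -- continuity facts
    have hcg : ContinuousOn g (Set.uIcc α T) := by
      rw [huIcc]
      exact ((continuousOn_id.sub continuousOn_const).inv₀ hxa).sub continuousOn_const
    have hcG : ContinuousOn G (Set.uIcc α T) := by
      rw [huIcc]
      exact continuousOn_const.div (((continuousOn_id.sub continuousOn_const)).pow 2)
        (fun x hx => pow_ne_zero 2 (hxa x hx))
    have hcu : Continuous u := hd1.continuous
    have hcu' : Continuous (deriv u) := hd2.continuous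
    have i_uu' : IntervalIntegrable (fun x => 2 * u x * deriv u x) volume α T :=
      ((continuous_const.mul hcu).mul hcu').intervalIntegrable α T
    have i_u'u' : IntervalIntegrable (fun x => deriv u x * deriv u x) volume α T :=
      (hcu'.mul hcu').intervalIntegrable α T
    have i_uu'' : IntervalIntegrable (fun x => u x * deriv (deriv u) x) volume α T :=
      (hcu.mul hc2).intervalIntegrable α T
    have i_Gv : IntervalIntegrable (fun x => G x * u x ^ 2) volume α T :=
      (hcG.mul ((hcu.pow 2).continuousOn)).intervalIntegrable
    have i_guu' : IntervalIntegrable (fun x => g x * (2 * u x * deriv u x)) volume α T :=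
      (hcg.mul ((continuous_const.mul hcu).mul hcu').continuousOn).intervalIntegrable
    have i_g2v : IntervalIntegrable (fun x => g x ^ 2 * u x ^ 2) volume α T :=
      ((hcg.pow 2).mul ((hcu.pow 2).continuousOn)).intervalIntegrable
    have i_v : IntervalIntegrable (fun x => u x ^ 2) volume α T :=
      (hcu.pow 2).intervalIntegrable α T
    -- integration by parts
    have ibp1 : ∫ x in α..T, g x * (2 * u x * deriv u x)
        = g T * u T ^ 2 - g α * u α ^ 2 - ∫ x in α..T, G x * u x ^ 2 :=
      integral_mul_deriv_eq_deriv_mul hgd (fun x _ => hvd x) (hcG.intervalIntegrable) i_uu'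
    have ibp2 : ∫ x in α..T, u x * deriv (deriv u) x
        = u T * deriv u T - u α * deriv u α - ∫ x in α..T, deriv u x * deriv u x :=
      integral_mul_deriv_eq_deriv_mul
        (fun x _ => (hd1.differentiableAt (x := x)).hasDerivAt)
        (fun x _ => (hd2.differentiableAt (x := x)).hasDerivAt)
        (hcu'.intervalIntegrable α T) (hc2.intervalIntegrable α T)
    -- expansion of the square
    have hexpand : ∫ x in α..T, (deriv u x - g x * u x)^2
        = ((∫ x in α..T, deriv u x * deriv u x)
          - ∫ x in α..T, g x * (2 * u x * deriv u x)) + ∫ x in α..T, g x ^ 2 * u x ^ 2 := by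
      rw [← integral_sub i_u'u' i_guu', ← integral_add (i_u'u'.sub i_guu') i_g2v]
      refine integral_congr (fun x hx => ?_)
      ring
    have h0 : (0:ℝ) ≤ ∫ x in α..T, (deriv u x - g x * u x)^2 :=
      intervalIntegral.integral_nonneg hαT (fun x _ => sq_nonneg _)
    -- the combined potential integral
    have hSle : (∫ x in α..T, (-(u x * deriv (deriv u) x) + G x * u x ^ 2 + g x ^ 2 * u x ^ 2))
        ≤ ∫ x in α..T, -ε * u x ^ 2 := by
      refine integral_mono_on hαT ((i_uu''.neg.add i_Gv).add i_g2v)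
        (i_v.const_mul (-ε)) ?_
      intro x hx
      have hxa' : a < x := lt_of_lt_of_le hαa hx.1
      have hx0 : 0 < x := lt_of_le_of_lt ha hxa'
      have hxane : x - a ≠ 0 := ne_of_gt (by linarith)
      have e1 : -(u x * deriv (deriv u) x) = (Φ x + μ) * u x ^ 2 := by
        rw [heq x]; ring
      have e2 : G x + g x ^ 2 = -(Z * (x - a)⁻¹) + Z^2/4 := by
        simp only [hGdef, hgdef]
        field_simp
        ring
      have hΦ : Φ x ≤ Z * (x - a)⁻¹ := by
        have h1 : Φ x ≤ Z / x := hb x hx0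
        have h2 : Z / x ≤ Z / (x - a) := by
          apply div_le_div_of_nonneg_left hZ.le (by linarith) (by linarith)
        rw [div_eq_mul_inv Z (x - a)] at h2
        linarith
      have hcoef : Φ x + μ + (G x + g x ^ 2) ≤ -ε := by
        rw [e2]; simp only [hεdef]; linarith
      have hmul := mul_le_mul_of_nonneg_right hcoef (sq_nonneg (u x))
      calc -(u x * deriv (deriv u) x) + G x * u x ^ 2 + g x ^ 2 * u x ^ 2
          = (Φ x + μ + (G x + g x ^ 2)) * u x ^ 2 := by rw [e1]; ring
        _ ≤ -ε * u x ^ 2 := hmul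
    have hconst : (∫ x in α..T, -ε * u x ^ 2) = -ε * ∫ x in α..T, u x ^ 2 :=
      intervalIntegral.integral_const_mul _ _
    -- ∫ u² ≥ κ
    have hvκ : κ ≤ ∫ x in α..T, u x ^ 2 := by
      have iv1 : IntervalIntegrable (fun x => u x ^ 2) volume α p :=
        (hcu.pow 2).intervalIntegrable α p
      have iv2 : IntervalIntegrable (fun x => u x ^ 2) volume p q :=
        (hcu.pow 2).intervalIntegrable p q
      have iv3 : IntervalIntegrable (fun x => u x ^ 2) volume q T :=
        (hcu.pow 2).intervalIntegrable q T
      have e3 : (∫ x in α..p, u x ^ 2) + ∫ x in p..q, u x ^ 2 = ∫ x in α..q, u x ^ 2 :=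
        integral_add_adjacent_intervals iv1 iv2
      have e4 : (∫ x in α..q, u x ^ 2) + ∫ x in q..T, u x ^ 2 = ∫ x in α..T, u x ^ 2 :=
        integral_add_adjacent_intervals (iv1.trans iv2) iv3
      have n1 : (0:ℝ) ≤ ∫ x in α..p, u x ^ 2 :=
        intervalIntegral.integral_nonneg hαp (fun x _ => sq_nonneg _)
      have n3 : (0:ℝ) ≤ ∫ x in q..T, u x ^ 2 :=
        intervalIntegral.integral_nonneg hqT (fun x _ => sq_nonneg _)
      simp only [hκdef]
      linarith
    -- combine everything
    have i_nuu'' : IntervalIntegrable (fun x => -(u x * deriv (deriv u) x)) volume α T :=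
      ((hcu.mul hc2).neg).intervalIntegrable α T
    have hneg : (∫ x in α..T, -(u x * deriv (deriv u) x))
        = -∫ x in α..T, u x * deriv (deriv u) x := integral_neg
    have hsplit : (∫ x in α..T, (-(u x * deriv (deriv u) x) + G x * u x ^ 2 + g x ^ 2 * u x ^ 2))
        = ((∫ x in α..T, -(u x * deriv (deriv u) x)) + ∫ x in α..T, G x * u x ^ 2)
          + ∫ x in α..T, g x ^ 2 * u x ^ 2 := by
      rw [← integral_add i_nuu'' i_Gv, ← integral_add (i_nuu''.add i_Gv) i_g2v]
    have hfinal := h0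
    rw [hexpand, ibp1] at hfinal
    -- hfinal : 0 ≤ (∫ u'u' - (gT uT² - gα uα² - ∫ Gv)) + ∫ g²v
    have hu'u' : (∫ x in α..T, deriv u x * deriv u x)
        = u T * deriv u T - u α * deriv u α - ∫ x in α..T, u x * deriv (deriv u) x := by
      linarith [ibp2]
    rw [hu'u'] at hfinal
    have : ε * (∫ x in α..T, u x ^ 2) ≤ A T + B α := by
      simp only [hAdef, hBdef, hgdef] at *
      linarith [hSle, hsplit, hconst, hfinal, hneg]
    calc ε * κ ≤ ε * ∫ x in α..T, u x ^ 2 := by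
          apply mul_le_mul_of_nonneg_left hvκ hε.le
      _ ≤ A T + B α := this
  -- limits
  obtain ⟨t2, t1⟩ := aux_decay hZ hμ hb hsm hL heq
  have t3 : Tendsto (fun T : ℝ => (T - a)⁻¹) atTop (nhds 0) := by
    apply tendsto_inv_atTop_zero.comp
    simpa [sub_eq_add_neg] using tendsto_atTop_add_const_right atTop (-a) tendsto_id
  have hA : Tendsto A atTop (nhds 0) := by
    have h := t1.sub ((t3.sub (tendsto_const_nhds (x := Z/2))).mul t2)
    simpa [hAdef] using h
  have tu : Tendsto u (nhdsWithin a (Set.Ioi a)) (nhds 0) := by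
    have h : Tendsto u (nhdsWithin a (Set.Ioi a)) (nhds (u a)) :=
      (hd1.continuous.tendsto a).mono_left nhdsWithin_le_nhds
    rwa [hua] at h
  have tu' : Tendsto (deriv u) (nhdsWithin a (Set.Ioi a)) (nhds (deriv u a)) :=
    Tendsto.mono_left (hd2.continuous.tendsto a) (nhdsWithin_le_nhds (s := Set.Ioi a))
  have tslope : Tendsto (fun α => u α * (α - a)⁻¹) (nhdsWithin a (Set.Ioi a))
      (nhds (deriv u a)) := by
    have h := hasDerivAt_iff_tendsto_slope.mp (hd1.differentiableAt (x := a)).hasDerivAt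
    have h2 := h.mono_left (nhdsWithin_mono a (fun x hx => ne_of_gt hx))
    refine h2.congr (fun α => ?_)
    rw [slope_def_field, hua]
    field_simp
    rw [sub_zero]
  have hB : Tendsto B (nhdsWithin a (Set.Ioi a)) (nhds 0) := by
    have hb1 := ((tu.mul tu').neg).add (((tslope.mul tu)).sub
      ((tendsto_const_nhds (x := Z/2)).mul (tu.mul tu)))
    have : (fun α => -(u α * deriv u α) + ((u α * (α - a)⁻¹) * u α - Z/2 * (u α * u α)))
        = B := by
      funext α; simp only [hBdef]; ring
    rw [this] at hb1
    simpa using hb1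
  -- conclusion
  have hεκ : 0 < ε * κ := mul_pos hε hκ
  have hAev : ∀ᶠ T in atTop, A T < ε*κ/2 := hA.eventually_lt_const (by linarith)
  have hBev : ∀ᶠ α in nhdsWithin a (Set.Ioi a), B α < ε*κ/2 :=
    hB.eventually_lt_const (by linarith)
  obtain ⟨T, hT1, hT2⟩ := (hAev.and (eventually_ge_atTop q)).exists
  have hIoc : Set.Ioc a p ∈ nhdsWithin a (Set.Ioi a) :=
    Ioc_mem_nhdsGT_of_mem ⟨le_refl a, hap⟩
  obtain ⟨α, hα1, hα2⟩ := (hBev.and hIoc).exists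
  have := key α T hα2.1 hα2.2 hT2
  linarith



lemma aux_reflect {μ : ℝ} {Φ u : ℝ → ℝ} (hsm : ContDiff ℝ 2 u)
    (hL : Integrable (fun z => u z ^ 2))
    (heq : ∀ z, deriv (deriv u) z = -(Φ z + μ) * u z) :
    ContDiff ℝ 2 (fun z => u (-z)) ∧ (Integrable fun z => u (-z) ^ 2) ∧
      (∀ z, deriv (fun w => u (-w)) z = -deriv u (-z)) ∧
      (∀ z, deriv (deriv (fun w => u (-w))) z = -(Φ (-z) + μ) * u (-z)) := by
  have hd1 : ∀ z, deriv (fun w => u (-w)) z = -deriv u (-z) := fun z => deriv_comp_neg u z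
  refine ⟨hsm.comp contDiff_neg, ?_, hd1, ?_⟩
  · exact hL.comp_neg
  · intro z
    have e1 : deriv (fun w => u (-w)) = fun w => -deriv u (-w) := funext hd1
    rw [e1]
    have e2 : deriv (fun w => -deriv u (-w)) z = -deriv (fun w => deriv u (-w)) z := deriv.neg
    rw [e2, deriv_comp_neg (deriv u) z, heq (-z)]
    ring

lemma aux_normalize {μ : ℝ} {Φ u : ℝ → ℝ} (hsm : ContDiff ℝ 2 u)
    (hL : Integrable (fun z => u z ^ 2))
    (heq : ∀ z, deriv (deriv u) z = -(Φ z + μ) * u z) (h0 : u 0 ≠ 0)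
    (hsign : (∀ z, 0 ≤ u z) ∨ (∀ z, u z ≤ 0)) :
    ∃ w : ℝ → ℝ, ContDiff ℝ 2 w ∧ (Integrable fun z => w z ^ 2) ∧
      (∀ z, deriv (deriv w) z = -(Φ z + μ) * w z) ∧ (∀ z, 0 ≤ w z) ∧ w 0 ≠ 0 := by
  rcases hsign with h | h
  · exact ⟨u, hsm, hL, heq, h, h0⟩
  · refine ⟨fun z => -u z, hsm.neg, by simpa using hL, ?_, fun z => by simpa using h z,
      by simpa using h0⟩
    intro z
    have hdn : deriv (fun z => -u z) = fun z => -deriv u z := funext fun z => deriv.neg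
    rw [hdn]
    have e : deriv (fun z => -deriv u z) z = -deriv (deriv u) z := deriv.neg
    rw [e, heq z]
    ring

lemma aux_structure {Z μ : ℝ} {Φ u : ℝ → ℝ} (hZ : 0 < Z) (hμ : μ < -Z^2/4)
    (hbound : ∀ z : ℝ, z ≠ 0 → Φ z ≤ Z / |z|)
    (hsm : ContDiff ℝ 2 u) (hL : Integrable (fun z => u z ^ 2)) (hu : u ≠ 0)
    (heq : ∀ z, deriv (deriv u) z = -(Φ z + μ) * u z) :
    u 0 ≠ 0 ∧ ((∀ z, 0 ≤ u z) ∨ (∀ z, u z ≤ 0)) := by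
  obtain ⟨hd1, hd2⟩ := aux_smooth hsm
  have hb' : ∀ z, 0 < z → Φ z ≤ Z / z := by
    intro z hz
    have := hbound z (ne_of_gt hz)
    rwa [abs_of_pos hz] at this
  have hb'' : ∀ z, 0 < z → Φ (-z) ≤ Z / z := by
    intro z hz
    have := hbound (-z) (by simp [ne_of_gt hz])
    rwa [abs_neg, abs_of_pos hz] at this
  obtain ⟨rsm, rL, rd1, req⟩ := aux_reflect hsm hL heq
  have hR : ∀ a, 0 ≤ a → u a = 0 → ∀ z, a < z → u z = 0 := by
    intro a ha h0 z hz
    by_contra hne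
    exact aux_hardy hZ hμ hb' hsm hL heq ha h0 hz hne
  have hLft : ∀ a, a ≤ 0 → u a = 0 → ∀ z, z < a → u z = 0 := by
    intro a ha h0 z hz
    by_contra hne
    refine aux_hardy (Φ := fun z => Φ (-z)) (u := fun z => u (-z)) hZ hμ hb'' rsm rL req
      (a := -a) (z₁ := -z) (by linarith) (by simpa using h0) (by linarith) (by simpa using hne)
  have h00 : u 0 ≠ 0 := by
    intro h
    apply hu
    funext z
    show u z = 0
    rcases lt_trichotomy z 0 with h' | h' | h'
    · exact hLft 0 le_rfl h z h'
    · rw [h']; exact h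
    · exact hR 0 le_rfl h z h'
  refine ⟨h00, ?_⟩
  by_contra hs
  push_neg at hs
  obtain ⟨⟨x, hx⟩, ⟨y, hy⟩⟩ := hs
  rcases lt_trichotomy x y with hxy | hxy | hxy
  · obtain ⟨c, hc, hc0⟩ := intermediate_value_Icc hxy.le hd1.continuous.continuousOn
      (Set.mem_Icc.mpr ⟨hx.le, hy.le⟩)
    rcases le_or_gt 0 c with hcs | hcs
    · have hcy : c < y := lt_of_le_of_ne hc.2 (fun h => by rw [h] at hc0; linarith)
      have := hR c hcs hc0 y hcy
      linarith
    · have hxc : x < c := lt_of_le_of_ne hc.1 (fun h => by rw [← h] at hc0; linarith)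
      have := hLft c hcs.le hc0 x hxc
      linarith
  · rw [hxy] at hx; linarith
  · obtain ⟨c, hc, hc0⟩ := intermediate_value_Icc' hxy.le hd1.continuous.continuousOn
      (Set.mem_Icc.mpr ⟨hx.le, hy.le⟩)
    rcases le_or_gt 0 c with hcs | hcs
    · have hcx : c < x := lt_of_le_of_ne hc.2 (fun h => by rw [h] at hc0; linarith)
      have := hR c hcs hc0 x hcx
      linarith
    · have hyc : y < c := lt_of_le_of_ne hc.1 (fun h => by rw [← h] at hc0; linarith)
      have := hLft c hcs.le hc0 y hyc
      linarith

lemma aux_final {Z μ₁ μ₂ : ℝ} {Φ w₁ w₂ : ℝ → ℝ} (hZ : 0 < Z) (hμ : μ₁ < μ₂)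
    (hμ₂ : μ₂ < -Z^2/4)
    (hbound : ∀ z : ℝ, z ≠ 0 → Φ z ≤ Z / |z|)
    (hsm₁ : ContDiff ℝ 2 w₁) (hsm₂ : ContDiff ℝ 2 w₂)
    (hL₁ : Integrable (fun z => w₁ z ^ 2)) (hL₂ : Integrable (fun z => w₂ z ^ 2))
    (heq₁ : ∀ z, deriv (deriv w₁) z = -(Φ z + μ₁) * w₁ z)
    (heq₂ : ∀ z, deriv (deriv w₂) z = -(Φ z + μ₂) * w₂ z)
    (hpos₁ : ∀ z, 0 ≤ w₁ z) (hpos₂ : ∀ z, 0 ≤ w₂ z)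
    (h01 : w₁ 0 ≠ 0) (h02 : w₂ 0 ≠ 0) : False := by
  obtain ⟨hd11, hd21⟩ := aux_smooth hsm₁
  obtain ⟨hd12, hd22⟩ := aux_smooth hsm₂
  have hμ₁ : μ₁ < -Z^2/4 := hμ.trans hμ₂
  have hb' : ∀ z, 0 < z → Φ z ≤ Z / z := by
    intro z hz
    have := hbound z (ne_of_gt hz)
    rwa [abs_of_pos hz] at this
  have hb'' : ∀ z, 0 < z → Φ (-z) ≤ Z / z := by
    intro z hz
    have := hbound (-z) (by simp [ne_of_gt hz])
    rwa [abs_neg, abs_of_pos hz] at this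
  have d₁ := aux_decay_pos hZ hμ₁ hb' hsm₁ hL₁ heq₁ hpos₁
  have d₂ := aux_decay_pos hZ hμ₂ hb' hsm₂ hL₂ heq₂ hpos₂
  obtain ⟨rsm₁, rL₁, rd₁, req₁⟩ := aux_reflect hsm₁ hL₁ heq₁
  obtain ⟨rsm₂, rL₂, rd₂, req₂⟩ := aux_reflect hsm₂ hL₂ heq₂
  have rpos₁ : ∀ z, 0 ≤ w₁ (-z) := fun z => hpos₁ (-z)
  have rpos₂ : ∀ z, 0 ≤ w₂ (-z) := fun z => hpos₂ (-z)
  have rdec₁ := aux_decay_pos (Φ := fun z => Φ (-z)) hZ hμ₁ hb'' rsm₁ rL₁ req₁ rpos₁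
  have rdec₂ := aux_decay_pos (Φ := fun z => Φ (-z)) hZ hμ₂ hb'' rsm₂ rL₂ req₂ rpos₂
  set W := fun z => w₁ z * deriv w₂ z - deriv w₁ z * w₂ z with hWdef
  have hWd : ∀ z, HasDerivAt W ((μ₁ - μ₂) * (w₁ z * w₂ z)) z := by
    intro z
    have h := ((hd11.differentiableAt (x := z)).hasDerivAt.mul
        (hd22.differentiableAt (x := z)).hasDerivAt).sub
      ((hd21.differentiableAt (x := z)).hasDerivAt.mul
        (hd12.differentiableAt (x := z)).hasDerivAt)
    refine h.congr_deriv ?_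
    rw [heq₁ z, heq₂ z]
    ring
  have hanti : Antitone W := by
    refine antitone_of_deriv_nonpos (fun z => (hWd z).differentiableAt) (fun z => ?_)
    rw [(hWd z).deriv]
    exact mul_nonpos_of_nonpos_of_nonneg (by linarith) (mul_nonneg (hpos₁ z) (hpos₂ z))
  have hWtop : Tendsto W atTop (nhds 0) := by
    have h := (d₁.1.mul d₂.2).sub (d₁.2.mul d₂.1)
    simpa [hWdef] using h
  have hWbot : Tendsto W atBot (nhds 0) := by
    have h := ((rdec₁.1.mul rdec₂.2).neg.add (rdec₁.2.mul rdec₂.1))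
    have hcong : ∀ z, -(w₁ (-z) * deriv (fun w => w₂ (-w)) z)
        + deriv (fun w => w₁ (-w)) z * w₂ (-z) = W (-z) := by
      intro z
      rw [rd₁ z, rd₂ z]
      simp only [hWdef]
      ring
    have h2 : Tendsto (fun z => W (-z)) atTop (nhds 0) := by
      have := h.congr hcong
      simpa using this
    have h3 := h2.comp tendsto_neg_atBot_atTop
    simp only [Function.comp_def, neg_neg] at h3
    exact h3
  have hW0 : ∀ y, W y = 0 := by
    intro y
    refine le_antisymm ?_ ?_
    · refine ge_of_tendsto hWbot ?_
      filter_upwards [eventually_le_atBot y] with x hx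
      exact hanti hx
    · refine le_of_tendsto hWtop ?_
      filter_upwards [eventually_ge_atTop y] with x hx
      exact hanti hx
  have hdW0 : deriv W 0 = 0 := by
    have : W = fun _ => (0:ℝ) := funext hW0
    rw [this]
    simp
  have := (hWd 0).deriv
  rw [hdW0] at this
  have hw1 : 0 < w₁ 0 := lt_of_le_of_ne (hpos₁ 0) (Ne.symm h01)
  have hw2 : 0 < w₂ 0 := lt_of_le_of_ne (hpos₂ 0) (Ne.symm h02)
  have hneg := mul_neg_of_neg_of_pos (show μ₁ - μ₂ < 0 by linarith) (mul_pos hw1 hw2)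
  linarith

/-- let `h = −d²/dz² − Φ(z)` with `Φ` even and `Φ(z) ≤ Z/|z|`.
If `μ₁ < μ₂` are eigenvalues of `h` (with square-integrable smooth eigenfunctions),
then the second lowest eigenvalue satisfies `μ₂ ≥ −Z²/4`. -/
theorem second_eigenvalue_lower_bound (Z : ℝ) (hZ : 0 < Z) (Φ : ℝ → ℝ)
    (heven : ∀ z, Φ (-z) = Φ z) (hbound : ∀ z : ℝ, z ≠ 0 → Φ z ≤ Z / |z|)
    (μ₁ μ₂ : ℝ) (hμ : μ₁ < μ₂) (u₁ u₂ : ℝ → ℝ)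
    (hu₁ : u₁ ≠ 0) (hu₂ : u₂ ≠ 0)
    (hsm₁ : ContDiff ℝ 2 u₁) (hsm₂ : ContDiff ℝ 2 u₂)
    (hL₁ : Integrable fun z => (u₁ z) ^ 2) (hL₂ : Integrable fun z => (u₂ z) ^ 2)
    (heig₁ : ∀ z, -(deriv (deriv u₁) z) - Φ z * u₁ z = μ₁ * u₁ z)
    (heig₂ : ∀ z, -(deriv (deriv u₂) z) - Φ z * u₂ z = μ₂ * u₂ z) :
    -(Z ^ 2) / 4 ≤ μ₂ := by
  by_contra hcon
  push_neg at hcon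
  have hcon' : μ₂ < -Z^2/4 := hcon
  have heq₁ : ∀ z, deriv (deriv u₁) z = -(Φ z + μ₁) * u₁ z := by
    intro z
    have h := heig₁ z
    linarith [h]
  have heq₂ : ∀ z, deriv (deriv u₂) z = -(Φ z + μ₂) * u₂ z := by
    intro z
    have h := heig₂ z
    linarith [h]
  have hμ₁c : μ₁ < -Z^2/4 := lt_trans hμ hcon'
  obtain ⟨h01, hsign₁⟩ := aux_structure hZ hμ₁c hbound hsm₁ hL₁ hu₁ heq₁
  obtain ⟨h02, hsign₂⟩ := aux_structure hZ hcon' hbound hsm₂ hL₂ hu₂ heq₂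
  obtain ⟨w₁, a1, a2, a3, a4, a5⟩ := aux_normalize hsm₁ hL₁ heq₁ h01 hsign₁
  obtain ⟨w₂, b1, b2, b3, b4, b5⟩ := aux_normalize hsm₂ hL₂ heq₂ h02 hsign₂
  exact aux_final hZ hμ hcon' hbound a1 b1 a2 b2 a3 b3 a4 b4 a5 b5
end
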